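/- Let R(τ) = (1/2)·log(G₁₂(τ)² − G₁₁(τ)²). Then, as τ → ∞, R(τ) − (1/2)·log(16·(8τ + log 16 − 1)/π⁴) → 0. -/

import Mathlib

open Real Filter Topology

/-- Complete elliptic integral of the first kind. -/
noncomputable def ellipticK (k : ℝ) : ℝ :=
  ∫ α in (0:ℝ)..(Real.pi / 2), 1 / Real.sqrt (1 - k ^ 2 * Real.sin α ^ 2)

/-- Complete elliptic integral of the second kind. -/
noncomputable def ellipticE (k : ℝ) : ℝ :=
  ∫ α in (0:ℝ)..(Real.pi / 2), Real.sqrt (1 - k ^ 2 * Real.sin α ^ 2)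

/-- κ(τ) = √(1 − e^{−8τ}). -/
noncomputable def kappa (τ : ℝ) : ℝ := Real.sqrt (1 - Real.exp (-8 * τ))

/-- κ̃(τ) = e^{−4τ}. -/
noncomputable def kappaT (τ : ℝ) : ℝ := Real.exp (-4 * τ)

/-- Diagonal entry of the reduced covariance matrix of the resonant mode. -/
noncomputable def G₁₁ (τ : ℝ) : ℝ :=
  -(4 / (Real.pi ^ 2 * kappa τ ^ 2)) *
    ((ellipticE (kappa τ) - kappaT τ ^ 2 * ellipticK (kappa τ)) *
      (ellipticK (kappa τ) - ellipticE (kappa τ)))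

/-- Off-diagonal entry of the reduced covariance matrix of the resonant mode. -/
noncomputable def G₁₂ (τ : ℝ) : ℝ :=
  (4 / Real.pi ^ 2) * (ellipticE (kappa τ) * ellipticK (kappa τ))


set_option maxHeartbeats 1000000

open intervalIntegral

-- continuity of the K-integrands
lemma contA {c : ℝ} (hc : 0 < c) (hc1 : c ≤ 1) :
    Continuous (fun β : ℝ => (Real.sqrt (Real.sin β ^ 2 + c ^ 2 * Real.cos β ^ 2))⁻¹) := by
  apply Continuous.inv₀
  · fun_prop
  · intro x
    have h : 0 < Real.sin x ^ 2 + c ^ 2 * Real.cos x ^ 2 := by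
      have h1c : (0:ℝ) ≤ 1 - c ^ 2 := by nlinarith
      nlinarith [Real.sin_sq_add_cos_sq x, mul_nonneg h1c (sq_nonneg (Real.sin x)),
        mul_pos hc hc]
    positivity

lemma contB {c : ℝ} (hc : 0 < c) :
    Continuous (fun β : ℝ => (Real.sqrt (β ^ 2 + c ^ 2))⁻¹) := by
  apply Continuous.inv₀
  · fun_prop
  · intro x
    have h : 0 < x ^ 2 + c ^ 2 := by positivity
    positivity

-- FTC for the B integral
lemma integralB {c : ℝ} (hc : 0 < c) :
    ∫ β in (0:ℝ)..(Real.pi/2), (Real.sqrt (β ^ 2 + c ^ 2))⁻¹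
      = Real.log (Real.pi/2 + Real.sqrt ((Real.pi/2) ^ 2 + c ^ 2)) - Real.log c := by
  have h := intervalIntegral.integral_eq_sub_of_hasDerivAt
    (f := fun β => Real.log (β + Real.sqrt (β ^ 2 + c ^ 2)))
    (f' := fun β => (Real.sqrt (β ^ 2 + c ^ 2))⁻¹)
    (a := 0) (b := Real.pi/2) ?_ ?_
  · rw [h]
    norm_num [Real.sqrt_sq hc.le]
  · intro x hx
    have hB : 0 < x ^ 2 + c ^ 2 := by positivity
    have hsB : 0 < Real.sqrt (x ^ 2 + c ^ 2) := Real.sqrt_pos.2 hB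
    have hxpos : 0 ≤ x := by
      rcases hx with ⟨h1, h2⟩
      simp only [min_def, max_def] at *
      split_ifs at h1 <;> nlinarith [Real.pi_pos]
    have hgx : 0 < x + Real.sqrt (x ^ 2 + c ^ 2) := by linarith
    have h1 : HasDerivAt (fun β : ℝ => β ^ 2 + c ^ 2) (2 * x) x := by
      simpa using ((hasDerivAt_pow 2 x).add_const (c ^ 2))
    have h2 : HasDerivAt (fun β : ℝ => Real.sqrt (β ^ 2 + c ^ 2))
        (2 * x / (2 * Real.sqrt (x ^ 2 + c ^ 2))) x := h1.sqrt hB.ne'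
    have h3 : HasDerivAt (fun β : ℝ => β + Real.sqrt (β ^ 2 + c ^ 2))
        (1 + 2 * x / (2 * Real.sqrt (x ^ 2 + c ^ 2))) x := (hasDerivAt_id x).add h2
    have h4 := (h3.log hgx.ne')
    convert h4 using 1
    rfl
    have hsq : Real.sqrt (x ^ 2 + c ^ 2) ^ 2 = x ^ 2 + c ^ 2 := Real.sq_sqrt hB.le
    show (Real.sqrt (x ^ 2 + c ^ 2))⁻¹ = (1 + 2 * x / (2 * Real.sqrt (x ^ 2 + c ^ 2))) / (x + Real.sqrt (x ^ 2 + c ^ 2))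
    field_simp
    nlinarith [Real.sq_sqrt hB.le]
    rfl
  · apply Continuous.intervalIntegrable
    exact contB hc

lemma hc_nonneg {c β : ℝ} (hc : 0 < c) (hc1 : c ≤ 1) :
    0 ≤ (Real.sqrt (Real.sin β ^ 2 + c ^ 2 * Real.cos β ^ 2))⁻¹ - (Real.sqrt (β ^ 2 + c ^ 2))⁻¹ := by
  have hAB : Real.sin β ^ 2 + c ^ 2 * Real.cos β ^ 2 ≤ β ^ 2 + c ^ 2 := by
    nlinarith [Real.sin_sq_le_sq (x := β), Real.cos_sq_le_one β, sq_nonneg c, mul_pos hc hc]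
  have hA : 0 < Real.sin β ^ 2 + c ^ 2 * Real.cos β ^ 2 := by
    have h1c : (0:ℝ) ≤ 1 - c ^ 2 := by nlinarith
    nlinarith [Real.sin_sq_add_cos_sq β, mul_nonneg h1c (sq_nonneg (Real.sin β)), mul_pos hc hc]
  have h1 : 0 < Real.sqrt (Real.sin β ^ 2 + c ^ 2 * Real.cos β ^ 2) := Real.sqrt_pos.2 hA
  have h2 : Real.sqrt (Real.sin β ^ 2 + c ^ 2 * Real.cos β ^ 2) ≤ Real.sqrt (β ^ 2 + c ^ 2) :=
    Real.sqrt_le_sqrt hAB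
  have := one_div_le_one_div_of_le h1 h2
  simp only [one_div] at this
  linarith

lemma hc_upper {c β : ℝ} (hc : 0 < c) (hc1 : c ≤ 1) (hβ0 : 0 ≤ β) (hβ1 : β ≤ 1) :
    (Real.sqrt (Real.sin β ^ 2 + c ^ 2 * Real.cos β ^ 2))⁻¹ - (Real.sqrt (β ^ 2 + c ^ 2))⁻¹
      ≤ 2 * β + c := by
  set A := Real.sin β ^ 2 + c ^ 2 * Real.cos β ^ 2 with hAdef
  set B := β ^ 2 + c ^ 2 with hBdef
  have hA : 0 < A := by
    have h1c : (0:ℝ) ≤ 1 - c ^ 2 := by nlinarith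
    nlinarith [Real.sin_sq_add_cos_sq β, mul_nonneg h1c (sq_nonneg (Real.sin β)), mul_pos hc hc]
  have hB : 0 < B := by positivity
  have hAB : A ≤ B := by
    nlinarith [Real.sin_sq_le_sq (x := β), Real.cos_sq_le_one β, mul_pos hc hc]
  have hsin : 2 / Real.pi * β ≤ Real.sin β := Real.mul_le_sin hβ0 (by nlinarith [Real.pi_gt_three])
  have hsinhalf : β / 2 ≤ Real.sin β := by
    have hpi : Real.pi ≤ 4 := Real.pi_le_four
    have hpi0 : 0 < Real.pi := Real.pi_pos
    have h2pi : (1:ℝ)/2 ≤ 2 / Real.pi := by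
      rw [div_le_div_iff₀ (by norm_num) hpi0]; linarith
    have := mul_le_mul_of_nonneg_right h2pi hβ0
    linarith
  have hcos : (1:ℝ) / 2 ≤ Real.cos β := by
    have := Real.one_sub_sq_div_two_le_cos (x := β)
    nlinarith
  have h4A : B ≤ 4 * A := by
    have h1 : β ^ 2 ≤ 4 * Real.sin β ^ 2 := by nlinarith
    have h2 : c ^ 2 ≤ 4 * (c ^ 2 * Real.cos β ^ 2) := by
      have hcsq : (1:ℝ)/4 ≤ Real.cos β ^ 2 := by nlinarith
      nlinarith [mul_nonneg (sq_nonneg c) (by linarith : (0:ℝ) ≤ 4 * Real.cos β ^ 2 - 1)]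
    nlinarith
  set sA := Real.sqrt A with hsAdef
  set sB := Real.sqrt B with hsBdef
  have hsA : 0 < sA := Real.sqrt_pos.2 hA
  have hsB : 0 < sB := Real.sqrt_pos.2 hB
  have hsA2 : sA ^ 2 = A := Real.sq_sqrt hA.le
  have hsB2 : sB ^ 2 = B := Real.sq_sqrt hB.le
  have hsAB : sA ≤ sB := Real.sqrt_le_sqrt hAB
  have hsB2A : sB ≤ 2 * sA := by
    have h5 : Real.sqrt B ≤ Real.sqrt (4 * A) := Real.sqrt_le_sqrt h4A
    have h4 : Real.sqrt (4 * A) = 2 * sA := by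
      rw [show (4:ℝ) * A = (2*sA)^2 by rw [mul_pow, hsA2]; ring]
      exact Real.sqrt_sq (by linarith)
    rw [h4] at h5; exact h5
  have hβsB : β ≤ sB := (Real.le_sqrt hβ0 hB.le).2 (by nlinarith)
  have hnum : B - A ≤ β ^ 4 / 2 + c ^ 2 * β ^ 2 := by
    have hsinle : Real.sin β ≤ β := Real.sin_le hβ0
    have hsge : β - β ^ 3 / 4 ≤ Real.sin β := by
      rcases eq_or_lt_of_le hβ0 with h | h
      · simp [← h]
      · linarith [Real.sin_gt_sub_cube h, pow_pos h 3]
    have hsin0 : 0 ≤ Real.sin β := by nlinarith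
    have p1 : β - Real.sin β ≤ β ^ 3 / 4 := by linarith
    have p2 : β + Real.sin β ≤ 2 * β := by linarith
    have hprod : (β - Real.sin β) * (β + Real.sin β) ≤ (β ^ 3 / 4) * (2 * β) :=
      mul_le_mul p1 p2 (by linarith) (by positivity)
    have r1 : (β - Real.sin β) * (β + Real.sin β) = β ^ 2 - Real.sin β ^ 2 := by ring
    have r2 : (β ^ 3 / 4) * (2 * β) = β ^ 4 / 2 := by ring
    have h1 : β ^ 2 - Real.sin β ^ 2 ≤ β ^ 4 / 2 := by linarith
    have h2 : c ^ 2 * Real.sin β ^ 2 ≤ c ^ 2 * β ^ 2 := by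
      exact mul_le_mul_of_nonneg_left (Real.sin_sq_le_sq (x := β)) (sq_nonneg c)
    have hcossin : Real.sin β ^ 2 + Real.cos β ^ 2 = 1 := Real.sin_sq_add_cos_sq β
    have hid : B - A = (β ^ 2 - Real.sin β ^ 2) + c ^ 2 * Real.sin β ^ 2 := by
      rw [hBdef, hAdef]; linear_combination (-(c^2)) * hcossin
    linarith
  have hmain : sB - sA ≤ (2 * β + c) * (sA * sB) := by
    have hfac : (sB - sA) * (sB + sA) = B - A := by linear_combination hsB2 - hsA2
    have e3 : β ^ 4 / 2 + c ^ 2 * β ^ 2 ≤ (β + c/2) * (β * B) := by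
      have hBb : β ^ 2 ≤ B := by nlinarith
      have hBc : 2 * c * β ≤ B := by nlinarith [sq_nonneg (β - c)]
      have q1 : β ^ 2 * β ^ 2 ≤ β ^ 2 * B := mul_le_mul_of_nonneg_left hBb (sq_nonneg β)
      have q2 : (c/2 * β) * (2 * c * β) ≤ (c/2 * β) * B :=
        mul_le_mul_of_nonneg_left hBc (by positivity)
      nlinarith [q1, q2]
    have e4 : (β + c/2) * (β * B) ≤ (2 * β + c) * (sA * sB) * (sB + sA) := by
      have h1 : (β + c/2) * (β * B) ≤ (β + c/2) * (sB * B) := by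
        have hq : β * B ≤ sB * B := mul_le_mul_of_nonneg_right hβsB hB.le
        exact mul_le_mul_of_nonneg_left hq (by linarith)
      have hkey : sB * B ≤ 2 * (sA * sB) * (sB + sA) := by
        have k1 : sB * sB ^ 2 ≤ 2 * sA * sB ^ 2 :=
          mul_le_mul_of_nonneg_right hsB2A (sq_nonneg sB)
        nlinarith [mul_nonneg (mul_nonneg hsA.le hsA.le) hsB.le, k1]
      have h2 : (β + c/2) * (sB * B) ≤ (2*β + c) * (sA * sB) * (sB + sA) := by
        have := mul_le_mul_of_nonneg_left hkey (show (0:ℝ) ≤ β + c/2 by linarith)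
        have hring : (β + c/2) * (2 * (sA * sB) * (sB + sA))
            = (2 * β + c) * (sA * sB) * (sB + sA) := by ring
        linarith [this, hring.le, hring.ge]
      linarith
    have hfin : (sB - sA) * (sB + sA) ≤ ((2*β+c) * (sA * sB)) * (sB + sA) := by
      have hr : (2*β+c) * (sA*sB) * (sB+sA) = ((2*β+c) * (sA * sB)) * (sB + sA) := by ring
      linarith [hfac, hnum, e3, e4, hr.le, hr.ge]
    exact le_of_mul_le_mul_right hfin (by positivity)
  have hinv : sA⁻¹ - sB⁻¹ = (sB - sA) / (sA * sB) := by
    field_simp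
  rw [hinv, div_le_iff₀ (by positivity)]
  linarith [hmain]

lemma u1_bound {c δ β : ℝ} (hc : 0 < c) (hc1 : c ≤ 1) (hδ : 0 < δ) (hβδ : δ ≤ β)
    (hβ : β ≤ Real.pi/2) :
    (Real.sin β)⁻¹ - (Real.sqrt (Real.sin β ^ 2 + c ^ 2 * Real.cos β ^ 2))⁻¹ ≤ 2*c/δ^2 := by
  set s := Real.sin β with hsdef
  set A := Real.sin β ^ 2 + c ^ 2 * Real.cos β ^ 2 with hAdef
  have hβ0 : 0 < β := lt_of_lt_of_le hδ hβδ
  have hcosβ : 0 ≤ Real.cos β := Real.cos_nonneg_of_mem_Icc (by constructor <;> nlinarith [Real.pi_pos])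
  have hs0 : 0 < s := Real.sin_pos_of_pos_of_lt_pi hβ0 (by nlinarith [Real.pi_pos])
  have hsδ : δ/2 ≤ s := by
    have hsin : 2 / Real.pi * β ≤ Real.sin β := Real.mul_le_sin hβ0.le hβ
    have hpi : Real.pi ≤ 4 := Real.pi_le_four
    have hpi0 : 0 < Real.pi := Real.pi_pos
    have h2pi : (1:ℝ)/2 ≤ 2 / Real.pi := by
      rw [div_le_div_iff₀ (by norm_num) hpi0]; linarith
    have := mul_le_mul_of_nonneg_right h2pi hβ0.le
    have hββ : β/2 ≤ s := by linarith
    linarith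
  have hA : 0 < A := by positivity
  set sA := Real.sqrt A with hsAdef
  have hsA : 0 < sA := Real.sqrt_pos.2 hA
  have hsA2 : sA ^ 2 = A := Real.sq_sqrt hA.le
  have hssA : s ≤ sA := (Real.le_sqrt hs0.le hA.le).2 (by nlinarith [sq_nonneg (c * Real.cos β)])
  have hccos : c * Real.cos β ≤ sA :=
    (Real.le_sqrt (by positivity) hA.le).2 (by nlinarith [sq_nonneg s])
  have hmain : sA - s ≤ (2*c/δ^2) * (s * sA) := by
    have hfac : (sA - s) * (sA + s) = c ^ 2 * Real.cos β ^ 2 := by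
      have : s ^ 2 = Real.sin β ^ 2 := by rw [hsdef]
      linear_combination hsA2
    have hrhs : c ^ 2 * Real.cos β ^ 2 ≤ ((2*c/δ^2) * (s * sA)) * (sA + s) := by
      have k0 : (0:ℝ) < 4*c/δ^2 := by positivity
      have k1 : ((2*c/δ^2) * (s * sA)) * (sA + s) ≥ (2*c/δ^2) * (s * sA) * (2*s) := by
        have : 2*s ≤ sA + s := by linarith
        nlinarith [mul_nonneg (mul_nonneg (by positivity : (0:ℝ) ≤ 2*c/δ^2) (mul_nonneg hs0.le hsA.le)) hs0.le]
      have k2 : (2*c/δ^2) * (s * sA) * (2*s) = (4*c/δ^2) * s^2 * sA := by ring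
      have k3 : (4*c/δ^2) * s^2 * sA ≥ (4*c/δ^2) * (δ^2/4) * sA := by
        have hs2 : δ^2/4 ≤ s^2 := by nlinarith
        nlinarith [mul_pos k0 hsA]
      have k4 : (4*c/δ^2) * (δ^2/4) * sA = c * sA := by field_simp
      have k5 : c * sA ≥ c * (c * Real.cos β) := by nlinarith
      have k6 : c * (c * Real.cos β) ≥ c^2 * Real.cos β ^ 2 := by
        nlinarith [mul_nonneg (mul_nonneg (mul_pos hc hc).le hcosβ)
          (sub_nonneg.2 (Real.cos_le_one β))]
      linarith
    have hpos : 0 < sA + s := by linarith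
    have := hfac.le.trans hrhs
    exact le_of_mul_le_mul_right this hpos
  have hinv : s⁻¹ - sA⁻¹ = (sA - s) / (s * sA) := by field_simp
  rw [hinv, div_le_iff₀ (by positivity)]
  linarith

lemma u2_bound {c δ β : ℝ} (hc : 0 < c) (hδ : 0 < δ) (hβδ : δ ≤ β) :
    β⁻¹ - (Real.sqrt (β ^ 2 + c ^ 2))⁻¹ ≤ c/(2*δ^2) := by
  have hβ0 : 0 < β := lt_of_lt_of_le hδ hβδ
  set B := β ^ 2 + c ^ 2 with hBdef
  have hB : 0 < B := by positivity
  set sB := Real.sqrt B with hsBdef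
  have hsB : 0 < sB := Real.sqrt_pos.2 hB
  have hsB2 : sB ^ 2 = B := Real.sq_sqrt hB.le
  have hβsB : β ≤ sB := (Real.le_sqrt hβ0.le hB.le).2 (by nlinarith)
  have hcsB : c ≤ sB := (Real.le_sqrt hc.le hB.le).2 (by nlinarith)
  have hmain : sB - β ≤ (c/(2*δ^2)) * (β * sB) := by
    have hfac : (sB - β) * (sB + β) = c ^ 2 := by linear_combination hsB2
    have hrhs : c ^ 2 ≤ ((c/(2*δ^2)) * (β * sB)) * (sB + β) := by
      have h1 : 0 < c/(2*δ^2) := by positivity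
      have h2 : δ * c ≤ β * sB := mul_le_mul hβδ hcsB hc.le (le_trans hδ.le hβδ)
      have h3 : 2*δ ≤ sB + β := by linarith
      have h4 : (δ*c)*(2*δ) ≤ (β*sB)*(sB+β) :=
        mul_le_mul h2 h3 (by positivity) (by positivity)
      have h5 := mul_le_mul_of_nonneg_left h4 h1.le
      have k2 : c/(2*δ^2) * ((δ*c)*(2*δ)) = c^2 := by field_simp
      have hr : c/(2*δ^2) * ((β*sB)*(sB+β)) = ((c/(2*δ^2))*(β*sB))*(sB+β) := by ring
      linarith
    have := hfac.le.trans hrhs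
    exact le_of_mul_le_mul_right this (by linarith)
  have hinv : β⁻¹ - sB⁻¹ = (sB - β) / (β * sB) := by field_simp
  rw [hinv, div_le_iff₀ (by positivity)]
  linarith

lemma u1_nonneg {c β : ℝ} (hc : 0 < c) (hs0 : 0 < Real.sin β) :
    0 ≤ (Real.sin β)⁻¹ - (Real.sqrt (Real.sin β ^ 2 + c ^ 2 * Real.cos β ^ 2))⁻¹ := by
  have hA : 0 < Real.sin β ^ 2 + c ^ 2 * Real.cos β ^ 2 := by positivity
  have h1 : Real.sin β ≤ Real.sqrt (Real.sin β ^ 2 + c ^ 2 * Real.cos β ^ 2) :=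
    (Real.le_sqrt hs0.le hA.le).2 (by nlinarith [sq_nonneg (c * Real.cos β)])
  have := one_div_le_one_div_of_le hs0 h1
  simp only [one_div] at this
  linarith

lemma u2_nonneg {c β : ℝ} (hc : 0 < c) (hβ0 : 0 < β) :
    0 ≤ β⁻¹ - (Real.sqrt (β ^ 2 + c ^ 2))⁻¹ := by
  have hB : 0 < β ^ 2 + c ^ 2 := by positivity
  have h1 : β ≤ Real.sqrt (β ^ 2 + c ^ 2) := (Real.le_sqrt hβ0.le hB.le).2 (by nlinarith)
  have := one_div_le_one_div_of_le hβ0 h1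
  simp only [one_div] at this
  linarith

lemma f0_integral {δ : ℝ} (hδ : 0 < δ) (hδ1 : δ ≤ 1) :
    ∫ β in δ..(Real.pi/2), ((Real.sin β)⁻¹ - β⁻¹)
      = (-Real.log (Real.pi/2)) -
        (Real.log (Real.sin (δ/2)) - Real.log (Real.cos (δ/2)) - Real.log δ) := by
  have hδπ : δ ≤ Real.pi/2 := le_trans hδ1 Real.one_le_pi_div_two
  have key : ∀ x ∈ Set.uIcc δ (Real.pi/2), 0 < x ∧ x ≤ Real.pi/2 := by
    intro x hx
    rw [Set.uIcc_of_le hδπ] at hx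
    exact ⟨lt_of_lt_of_le hδ hx.1, hx.2⟩
  have h := intervalIntegral.integral_eq_sub_of_hasDerivAt
    (f := fun β => Real.log (Real.sin (β/2)) - Real.log (Real.cos (β/2)) - Real.log β)
    (f' := fun β => (Real.sin β)⁻¹ - β⁻¹)
    (a := δ) (b := Real.pi/2) ?_ ?_
  · rw [h]
    rw [show Real.pi/2/2 = Real.pi/4 by ring]
    rw [Real.sin_pi_div_four, Real.cos_pi_div_four]
    ring
  · intro x hx
    obtain ⟨hx0, hxπ⟩ := key x hx
    have hx2 : 0 < x/2 := by linarith
    have hx2' : x/2 < Real.pi/2 := by nlinarith [Real.pi_pos]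
    have hsinpos : 0 < Real.sin (x/2) := Real.sin_pos_of_pos_of_lt_pi hx2 (by nlinarith [Real.pi_pos])
    have hcospos : 0 < Real.cos (x/2) := Real.cos_pos_of_mem_Ioo ⟨by linarith, hx2'⟩
    have hhalf : HasDerivAt (fun y : ℝ => y/2) (1/2) x := (hasDerivAt_id x).div_const 2
    have hs : HasDerivAt (fun y : ℝ => Real.sin (y/2)) (Real.cos (x/2) * (1/2)) x :=
      hhalf.sin
    have hcs : HasDerivAt (fun y : ℝ => Real.cos (y/2)) (-Real.sin (x/2) * (1/2)) x :=
      hhalf.cos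
    have hls : HasDerivAt (fun y : ℝ => Real.log (Real.sin (y/2)))
        ((Real.cos (x/2) * (1/2)) / Real.sin (x/2)) x := hs.log hsinpos.ne'
    have hlc : HasDerivAt (fun y : ℝ => Real.log (Real.cos (y/2)))
        ((-Real.sin (x/2) * (1/2)) / Real.cos (x/2)) x := hcs.log hcospos.ne'
    have hlx : HasDerivAt Real.log x⁻¹ x := Real.hasDerivAt_log hx0.ne'
    have hcomb := (hls.sub hlc).sub hlx
    convert hcomb using 1
    rfl
    show (Real.sin x)⁻¹ - x⁻¹ = _
    have hsinx : Real.sin x = 2 * Real.sin (x/2) * Real.cos (x/2) := by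
      rw [show x = 2 * (x/2) by ring, Real.sin_two_mul]
      ring_nf
    rw [hsinx]
    have hpy := Real.sin_sq_add_cos_sq (x/2)
    field_simp
    linear_combination (-x) * hpy
  · apply ContinuousOn.intervalIntegrable
    apply ContinuousOn.sub
    · apply ContinuousOn.inv₀
      · exact Real.continuous_sin.continuousOn
      · intro x hx
        obtain ⟨hx0, hxπ⟩ := key x hx
        exact (Real.sin_pos_of_pos_of_lt_pi hx0 (by nlinarith [Real.pi_pos])).ne'
    · exact continuousOn_inv₀.mono (by intro x hx; exact (key x hx).1.ne')

lemma T3_bound {δ : ℝ} (hδ : 0 < δ) (hδ1 : δ ≤ 1) :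
    |((-Real.log (Real.pi/2)) -
        (Real.log (Real.sin (δ/2)) - Real.log (Real.cos (δ/2)) - Real.log δ))
      - (Real.log 4 - Real.log Real.pi)| ≤ δ^2 := by
  set x := δ/2 with hxdef
  have hx0 : 0 < x := by positivity
  have hx1 : x ≤ 1/2 := by rw [hxdef]; linarith
  have hxπ : x < Real.pi/2 := by nlinarith [Real.pi_gt_three]
  have hsinpos : 0 < Real.sin x := Real.sin_pos_of_pos_of_lt_pi hx0 (by nlinarith [Real.pi_pos])
  have hcospos : 0 < Real.cos x := Real.cos_pos_of_mem_Ioo ⟨by linarith, hxπ⟩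
  -- rewrite the expression
  have hlogπ2 : Real.log (Real.pi/2) = Real.log Real.pi - Real.log 2 :=
    Real.log_div Real.pi_ne_zero (by norm_num)
  have hlog4 : Real.log 4 = 2 * Real.log 2 := by
    rw [show (4:ℝ) = 2^2 by norm_num, Real.log_pow]
    push_cast; ring
  have hexpr : ((-Real.log (Real.pi/2)) -
        (Real.log (Real.sin (δ/2)) - Real.log (Real.cos (δ/2)) - Real.log δ))
      - (Real.log 4 - Real.log Real.pi)
      = Real.log δ + Real.log (Real.cos x) - Real.log (Real.sin x) - Real.log 2 := by
    rw [hlogπ2, hlog4, hxdef]; ring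
  rw [hexpr]
  have hupper : Real.log δ + Real.log (Real.cos x) - Real.log (Real.sin x) - Real.log 2 ≤ 0 := by
    have htan : x < Real.tan x := Real.lt_tan hx0 hxπ
    have htan2 : Real.tan x = Real.sin x / Real.cos x := Real.tan_eq_sin_div_cos x
    have hkey : δ * Real.cos x < 2 * Real.sin x := by
      rw [htan2] at htan
      have := (lt_div_iff₀ hcospos).1 htan
      rw [hxdef] at this
      linarith
    have h1 : Real.log δ + Real.log (Real.cos x) = Real.log (δ * Real.cos x) :=
      (Real.log_mul hδ.ne' hcospos.ne').symm
    have h2 : Real.log 2 + Real.log (Real.sin x) = Real.log (2 * Real.sin x) :=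
      (Real.log_mul (by norm_num) hsinpos.ne').symm
    have h3 : Real.log (δ * Real.cos x) ≤ Real.log (2 * Real.sin x) :=
      Real.log_le_log (by positivity) hkey.le
    linarith
  have hlower : -δ^2 ≤ Real.log δ + Real.log (Real.cos x) - Real.log (Real.sin x) - Real.log 2 := by
    have hsinle : Real.sin x ≤ x := Real.sin_le hx0.le
    have h1 : Real.log (Real.sin x) ≤ Real.log x := Real.log_le_log hsinpos hsinle
    have h2 : Real.log x = Real.log δ - Real.log 2 := by
      rw [hxdef, Real.log_div hδ.ne' (by norm_num)]
    have hcoslb : 1 - δ^2/8 ≤ Real.cos x := by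
      have := Real.one_sub_sq_div_two_le_cos (x := x)
      rw [hxdef] at this ⊢
      nlinarith
    have hexple : Real.exp (-(δ^2/4)) ≤ 1 - δ^2/8 := by
      have ha : Real.exp (δ^2/4) ≥ 1 + δ^2/4 := by
        have := Real.add_one_le_exp (δ^2/4); linarith
      have hb : Real.exp (-(δ^2/4)) = (Real.exp (δ^2/4))⁻¹ := by
        rw [Real.exp_neg]
      rw [hb]
      have hc2 : (0:ℝ) < 1 + δ^2/4 := by positivity
      have hd : (Real.exp (δ^2/4))⁻¹ ≤ (1 + δ^2/4)⁻¹ := by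
        apply inv_anti₀ hc2 ha
      have he : (1 + δ^2/4)⁻¹ ≤ 1 - δ^2/8 := by
        rw [inv_le_iff_one_le_mul₀ hc2]
        have hδ2 : δ^2 ≤ 1 := by nlinarith
        nlinarith [mul_le_mul_of_nonneg_left hδ2 (sq_nonneg δ)]
      linarith
    have h3 : -(δ^2/4) ≤ Real.log (Real.cos x) := by
      have := Real.log_le_log (Real.exp_pos _) (le_trans hexple hcoslb)
      rwa [Real.log_exp] at this
    nlinarith
  rw [abs_le]
  constructor <;> nlinarith

lemma exp8 (τ : ℝ) : (Real.exp (-4*τ))^2 = Real.exp (-8*τ) := by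
  rw [pow_two, ← Real.exp_add]; ring_nf

lemma kappa_sq {τ : ℝ} (hτ : 0 ≤ τ) : kappa τ ^ 2 = 1 - (Real.exp (-4*τ))^2 := by
  rw [kappa, Real.sq_sqrt, exp8]
  have : Real.exp (-8*τ) ≤ Real.exp 0 := Real.exp_le_exp.2 (by linarith)
  rw [Real.exp_zero] at this
  linarith

lemma exp_pos' (τ : ℝ) : 0 < Real.exp (-4*τ) := Real.exp_pos _

lemma exp_le_one' {τ : ℝ} (hτ : 0 ≤ τ) : Real.exp (-4*τ) ≤ 1 := by
  have : Real.exp (-4*τ) ≤ Real.exp 0 := Real.exp_le_exp.2 (by linarith)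
  rwa [Real.exp_zero] at this

lemma KasIntegral {τ : ℝ} (hτ : 0 ≤ τ) :
    ellipticK (kappa τ) = ∫ β in (0:ℝ)..(Real.pi/2),
      (Real.sqrt (Real.sin β ^ 2 + (Real.exp (-4*τ))^2 * Real.cos β ^ 2))⁻¹ := by
  unfold ellipticK
  have hsub := intervalIntegral.integral_comp_sub_left (a := (0:ℝ)) (b := Real.pi/2)
    (fun α => 1 / Real.sqrt (1 - kappa τ ^ 2 * Real.sin α ^ 2)) (Real.pi/2)
  norm_num at hsub
  simp only [one_div]
  rw [← hsub]
  apply intervalIntegral.integral_congr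
  intro x _
  simp only [Real.sin_pi_div_two_sub, one_div]
  congr 2
  have hpy := Real.sin_sq_add_cos_sq x
  rw [kappa_sq hτ]
  linear_combination -hpy

lemma Ebound {τ : ℝ} (hτ : 0 ≤ τ) :
    1 ≤ ellipticE (kappa τ) ∧ ellipticE (kappa τ) ≤ 1 + Real.exp (-4*τ) := by
  set c := Real.exp (-4*τ) with hcdef
  have hc : 0 < c := Real.exp_pos _
  have hc1 : c ≤ 1 := exp_le_one' hτ
  have hks : kappa τ ^ 2 = 1 - c^2 := kappa_sq hτ
  have hintg : Continuous (fun α : ℝ => Real.sqrt (1 - kappa τ ^ 2 * Real.sin α ^ 2)) := by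
    fun_prop
  have hint : IntervalIntegrable (fun α : ℝ => Real.sqrt (1 - kappa τ ^ 2 * Real.sin α ^ 2))
      MeasureTheory.volume 0 (Real.pi/2) := hintg.intervalIntegrable _ _
  constructor
  · have h1 : ∫ α in (0:ℝ)..(Real.pi/2), Real.cos α = 1 := by
      simp [integral_cos]
    have hmono : (∫ α in (0:ℝ)..(Real.pi/2), Real.cos α)
        ≤ ∫ α in (0:ℝ)..(Real.pi/2), Real.sqrt (1 - kappa τ ^ 2 * Real.sin α ^ 2) := by
      apply intervalIntegral.integral_mono_on (by positivity)
        ((Real.continuous_cos).intervalIntegrable _ _) hint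
      intro x hx
      rw [Set.mem_Icc] at hx
      have hcos : 0 ≤ Real.cos x := Real.cos_nonneg_of_mem_Icc ⟨by linarith [Real.pi_pos], hx.2⟩
      have harg : Real.cos x ^ 2 ≤ 1 - kappa τ ^ 2 * Real.sin x ^ 2 := by
        rw [hks]
        have hpy := Real.sin_sq_add_cos_sq x
        nlinarith [sq_nonneg (c * Real.sin x)]
      calc Real.cos x = Real.sqrt (Real.cos x ^ 2) := by rw [Real.sqrt_sq hcos]
        _ ≤ _ := Real.sqrt_le_sqrt harg
    rw [h1] at hmono
    rw [ellipticE]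
    exact hmono
  · have h2 : ∫ α in (0:ℝ)..(Real.pi/2), (Real.cos α + c * Real.sin α) = 1 + c := by
      rw [intervalIntegral.integral_add ((Real.continuous_cos).intervalIntegrable _ _)
        ((by fun_prop : Continuous (fun α : ℝ => c * Real.sin α)).intervalIntegrable _ _)]
      simp [integral_cos, intervalIntegral.integral_const_mul, integral_sin]
    have hmono : (∫ α in (0:ℝ)..(Real.pi/2), Real.sqrt (1 - kappa τ ^ 2 * Real.sin α ^ 2))
        ≤ ∫ α in (0:ℝ)..(Real.pi/2), (Real.cos α + c * Real.sin α) := by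
      apply intervalIntegral.integral_mono_on (by positivity) hint
        (((Real.continuous_cos).add (continuous_const.mul Real.continuous_sin)).intervalIntegrable _ _)
      intro x hx
      rw [Set.mem_Icc] at hx
      have hcos : 0 ≤ Real.cos x := Real.cos_nonneg_of_mem_Icc ⟨by linarith [Real.pi_pos], hx.2⟩
      have hsin : 0 ≤ Real.sin x := Real.sin_nonneg_of_nonneg_of_le_pi hx.1 (by nlinarith [Real.pi_pos, hx.2])
      have harg : 1 - kappa τ ^ 2 * Real.sin x ^ 2 ≤ (Real.cos x + c * Real.sin x)^2 := by
        rw [hks]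
        have hpy := Real.sin_sq_add_cos_sq x
        nlinarith [mul_nonneg (mul_nonneg hc.le hsin) hcos]
      calc Real.sqrt (1 - kappa τ ^ 2 * Real.sin x ^ 2) ≤ Real.sqrt ((Real.cos x + c * Real.sin x)^2) :=
            Real.sqrt_le_sqrt harg
        _ = Real.cos x + c * Real.sin x := Real.sqrt_sq (by positivity)
    rw [h2] at hmono
    rw [ellipticE]
    exact hmono

lemma term1_bound {c : ℝ} (hc : 0 < c) (hc1 : c ≤ 1) :
    Real.log Real.pi ≤ Real.log (Real.pi/2 + Real.sqrt ((Real.pi/2)^2 + c^2)) ∧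
    Real.log (Real.pi/2 + Real.sqrt ((Real.pi/2)^2 + c^2)) ≤ Real.log Real.pi + c^2 := by
  have hπ : 0 < Real.pi := Real.pi_pos
  constructor
  · apply Real.log_le_log hπ
    have : Real.pi/2 ≤ Real.sqrt ((Real.pi/2)^2 + c^2) :=
      (Real.le_sqrt (by positivity) (by positivity)).2 (by nlinarith)
    linarith
  · have h1 : Real.sqrt ((Real.pi/2)^2 + c^2) ≤ Real.pi/2 + c^2/Real.pi := by
      have e1 : (Real.pi/2 + c^2/Real.pi)^2 = (Real.pi/2)^2 + c^2 + (c^2/Real.pi)^2 := by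
        field_simp; ring
      calc Real.sqrt ((Real.pi/2)^2 + c^2) ≤ Real.sqrt ((Real.pi/2 + c^2/Real.pi)^2) :=
            Real.sqrt_le_sqrt (by rw [e1]; nlinarith [sq_nonneg (c^2/Real.pi)])
        _ = Real.pi/2 + c^2/Real.pi := Real.sqrt_sq (by positivity)
    have h2 : Real.log (Real.pi/2 + Real.sqrt ((Real.pi/2)^2 + c^2))
        ≤ Real.log (Real.pi + c^2/Real.pi) := by
      apply Real.log_le_log (by positivity)
      · have : 0 ≤ Real.sqrt ((Real.pi/2)^2 + c^2) := Real.sqrt_nonneg _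
        linarith
    have h3 : Real.log (Real.pi + c^2/Real.pi) = Real.log Real.pi + Real.log (1 + c^2/Real.pi^2) := by
      rw [← Real.log_mul hπ.ne' (by positivity)]
      congr 1
      field_simp
    have h4 : Real.log (1 + c^2/Real.pi^2) ≤ c^2/Real.pi^2 := by
      have := Real.log_le_sub_one_of_pos (show (0:ℝ) < 1 + c^2/Real.pi^2 by positivity)
      linarith
    have h5 : c^2/Real.pi^2 ≤ c^2 := by
      rw [div_le_iff₀ (by positivity)]
      nlinarith [mul_nonneg (sq_nonneg c) (show (0:ℝ) ≤ Real.pi^2 - 1 by nlinarith [Real.pi_gt_three])]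
    linarith

lemma Kest {τ : ℝ} (hτ : 0 ≤ τ) :
    |ellipticK (kappa τ) - (4*τ + Real.log 4)| ≤ 10 * Real.exp (-2*τ) := by
  set c := Real.exp (-4*τ) with hcdef
  set δ := Real.exp (-τ) with hδdef
  have hc : 0 < c := Real.exp_pos _
  have hδ : 0 < δ := Real.exp_pos _
  have hc1 : c ≤ 1 := by
    rw [hcdef, show (1:ℝ) = Real.exp 0 by rw [Real.exp_zero]]
    exact Real.exp_le_exp.2 (by linarith)
  have hδ1 : δ ≤ 1 := by
    rw [hδdef, show (1:ℝ) = Real.exp 0 by rw [Real.exp_zero]]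
    exact Real.exp_le_exp.2 (by linarith)
  have hcδ : c ≤ δ := Real.exp_le_exp.2 (by linarith)
  have hδπ : δ ≤ Real.pi/2 := le_trans hδ1 Real.one_le_pi_div_two
  have hδsq : δ^2 = Real.exp (-2*τ) := by
    rw [hδdef, pow_two, ← Real.exp_add]; ring_nf
  have hcδ2 : c/δ^2 = Real.exp (-2*τ) := by
    rw [hδsq, hcdef, ← Real.exp_sub]; ring_nf
  have hK : ellipticK (kappa τ) = ∫ β in (0:ℝ)..(Real.pi/2),
      (Real.sqrt (Real.sin β ^ 2 + c^2 * Real.cos β ^ 2))⁻¹ := KasIntegral hτ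
  -- integrability
  have iA1 : IntervalIntegrable (fun β : ℝ => (Real.sqrt (Real.sin β ^ 2 + c^2 * Real.cos β ^ 2))⁻¹)
      MeasureTheory.volume 0 δ := (contA hc hc1).intervalIntegrable _ _
  have iA2 : IntervalIntegrable (fun β : ℝ => (Real.sqrt (Real.sin β ^ 2 + c^2 * Real.cos β ^ 2))⁻¹)
      MeasureTheory.volume δ (Real.pi/2) := (contA hc hc1).intervalIntegrable _ _
  have iB1 : IntervalIntegrable (fun β : ℝ => (Real.sqrt (β ^ 2 + c^2))⁻¹)
      MeasureTheory.volume 0 δ := (contB hc).intervalIntegrable _ _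
  have iB2 : IntervalIntegrable (fun β : ℝ => (Real.sqrt (β ^ 2 + c^2))⁻¹)
      MeasureTheory.volume δ (Real.pi/2) := (contB hc).intervalIntegrable _ _
  have i01 : IntervalIntegrable (fun β : ℝ => (Real.sin β)⁻¹ - β⁻¹)
      MeasureTheory.volume δ (Real.pi/2) := by
    apply ContinuousOn.intervalIntegrable
    apply ContinuousOn.sub
    · apply ContinuousOn.inv₀ (Real.continuous_sin.continuousOn)
      intro x hx
      rw [Set.uIcc_of_le hδπ] at hx
      exact (Real.sin_pos_of_pos_of_lt_pi (lt_of_lt_of_le hδ hx.1)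
        (by nlinarith [Real.pi_pos, hx.2])).ne'
    · apply ContinuousOn.inv₀ continuousOn_id
      intro x hx
      rw [Set.uIcc_of_le hδπ] at hx
      exact (lt_of_lt_of_le hδ hx.1).ne'
  -- splits
  have splitA : (∫ β in (0:ℝ)..(Real.pi/2), (Real.sqrt (Real.sin β ^ 2 + c^2 * Real.cos β ^ 2))⁻¹)
      = (∫ β in (0:ℝ)..δ, (Real.sqrt (Real.sin β ^ 2 + c^2 * Real.cos β ^ 2))⁻¹)
        + ∫ β in δ..(Real.pi/2), (Real.sqrt (Real.sin β ^ 2 + c^2 * Real.cos β ^ 2))⁻¹ :=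
    (intervalIntegral.integral_add_adjacent_intervals iA1 iA2).symm
  have splitB : (∫ β in (0:ℝ)..(Real.pi/2), (Real.sqrt (β ^ 2 + c^2))⁻¹)
      = (∫ β in (0:ℝ)..δ, (Real.sqrt (β ^ 2 + c^2))⁻¹)
        + ∫ β in δ..(Real.pi/2), (Real.sqrt (β ^ 2 + c^2))⁻¹ :=
    (intervalIntegral.integral_add_adjacent_intervals iB1 iB2).symm
  -- T1 bound
  have hT1 : |(∫ β in (0:ℝ)..δ, (Real.sqrt (Real.sin β ^ 2 + c^2 * Real.cos β ^ 2))⁻¹)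
      - ∫ β in (0:ℝ)..δ, (Real.sqrt (β ^ 2 + c^2))⁻¹| ≤ 2*δ^2 := by
    rw [← intervalIntegral.integral_sub iA1 iB1]
    have hup : (∫ β in (0:ℝ)..δ, ((Real.sqrt (Real.sin β ^ 2 + c^2 * Real.cos β ^ 2))⁻¹
        - (Real.sqrt (β ^ 2 + c^2))⁻¹)) ≤ ∫ β in (0:ℝ)..δ, (2*β + c) := by
      apply intervalIntegral.integral_mono_on hδ.le (iA1.sub iB1)
        ((by fun_prop : Continuous (fun β : ℝ => 2*β + c)).intervalIntegrable _ _)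
      intro x hx
      exact hc_upper hc hc1 hx.1 (le_trans hx.2 hδ1)
    have hpoly : (∫ x in (0:ℝ)..δ, (2*x + c)) = δ^2 + c*δ := by
      rw [intervalIntegral.integral_add
        ((by fun_prop : Continuous (fun β : ℝ => 2*β)).intervalIntegrable _ _)
        (intervalIntegrable_const)]
      rw [intervalIntegral.integral_const_mul, integral_id, intervalIntegral.integral_const]
      simp
      ring
    have hlo : 0 ≤ ∫ β in (0:ℝ)..δ, ((Real.sqrt (Real.sin β ^ 2 + c^2 * Real.cos β ^ 2))⁻¹
        - (Real.sqrt (β ^ 2 + c^2))⁻¹) := by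
      apply intervalIntegral.integral_nonneg hδ.le
      intro x _
      exact hc_nonneg hc hc1
    rw [abs_of_nonneg hlo]
    have hcδδ : c*δ ≤ δ^2 := by nlinarith
    linarith [hup, hpoly.le, hpoly.ge]
  -- T2 bound
  have hT2 : |(∫ β in δ..(Real.pi/2), (Real.sqrt (Real.sin β ^ 2 + c^2 * Real.cos β ^ 2))⁻¹)
      - (∫ β in δ..(Real.pi/2), (Real.sqrt (β ^ 2 + c^2))⁻¹)
      - ∫ β in δ..(Real.pi/2), ((Real.sin β)⁻¹ - β⁻¹)| ≤ 6 * (c/δ^2) := by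
    rw [← intervalIntegral.integral_sub iA2 iB2, ← intervalIntegral.integral_sub (iA2.sub iB2) i01]
    have hbd : ∀ x ∈ Set.uIoc δ (Real.pi/2),
        ‖(Real.sqrt (Real.sin x ^ 2 + c^2 * Real.cos x ^ 2))⁻¹ - (Real.sqrt (x ^ 2 + c^2))⁻¹
          - ((Real.sin x)⁻¹ - x⁻¹)‖ ≤ 3*(c/δ^2) := by
      intro x hx
      rw [Set.uIoc_of_le hδπ] at hx
      have hxδ : δ ≤ x := hx.1.le
      have hxπ : x ≤ Real.pi/2 := hx.2
      have hx0 : 0 < x := lt_of_lt_of_le hδ hxδ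
      have hsin0 : 0 < Real.sin x := Real.sin_pos_of_pos_of_lt_pi hx0 (by nlinarith [Real.pi_pos])
      have b1 := u1_bound (c := c) (δ := δ) (β := x) hc hc1 hδ hxδ hxπ
      have b2 := u2_bound (c := c) (δ := δ) (β := x) hc hδ hxδ
      have n1 := u1_nonneg (c := c) (β := x) hc hsin0
      have n2 := u2_nonneg (c := c) (β := x) hc hx0
      have r1 : c/(2*δ^2) = (c/δ^2)/2 := by ring
      have r2 : 2*c/δ^2 = 2*(c/δ^2) := by ring
      have hq : 0 < c/δ^2 := by positivity
      rw [Real.norm_eq_abs, abs_le]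
      constructor
      · nlinarith [b1, n2]
      · nlinarith [b2, n1]
    have hnorm := intervalIntegral.norm_integral_le_of_norm_le_const hbd
    rw [Real.norm_eq_abs] at hnorm
    have hlen : |Real.pi/2 - δ| ≤ 2 := by
      rw [abs_of_nonneg (by linarith)]
      nlinarith [Real.pi_le_four]
    have h3 : (0:ℝ) ≤ 3*(c/δ^2) := by positivity
    calc |∫ β in δ..(Real.pi/2),
          ((Real.sqrt (Real.sin β ^ 2 + c^2 * Real.cos β ^ 2))⁻¹ - (Real.sqrt (β ^ 2 + c^2))⁻¹
            - ((Real.sin β)⁻¹ - β⁻¹))|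
          ≤ 3*(c/δ^2) * |Real.pi/2 - δ| := hnorm
      _ ≤ 6 * (c/δ^2) := by nlinarith [hlen, h3]
  -- value of B-integral and f0-integral
  have hIB := integralB (c := c) hc
  have hI0 := f0_integral hδ hδ1
  have hT3 : |(∫ β in δ..(Real.pi/2), ((Real.sin β)⁻¹ - β⁻¹))
      - (Real.log 4 - Real.log Real.pi)| ≤ δ^2 := by
    rw [hI0]; exact T3_bound hδ hδ1
  have ht1 := term1_bound hc hc1
  have hlogc : Real.log c = -(4*τ) := by rw [hcdef, Real.log_exp]; ring
  have hT4 : |((∫ β in (0:ℝ)..δ, (Real.sqrt (β ^ 2 + c^2))⁻¹)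
        + ∫ β in δ..(Real.pi/2), (Real.sqrt (β ^ 2 + c^2))⁻¹)
      - (Real.log Real.pi - Real.log c)| ≤ c^2 := by
    rw [← splitB, hIB]
    rw [abs_le]
    constructor
    · linarith [ht1.1]
    · linarith [ht1.2]
  -- assembly
  have hsum : ellipticK (kappa τ) - (4*τ + Real.log 4)
      = ((∫ β in (0:ℝ)..δ, (Real.sqrt (Real.sin β ^ 2 + c^2 * Real.cos β ^ 2))⁻¹)
          - ∫ β in (0:ℝ)..δ, (Real.sqrt (β ^ 2 + c^2))⁻¹)
        + ((∫ β in δ..(Real.pi/2), (Real.sqrt (Real.sin β ^ 2 + c^2 * Real.cos β ^ 2))⁻¹)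
            - (∫ β in δ..(Real.pi/2), (Real.sqrt (β ^ 2 + c^2))⁻¹)
            - ∫ β in δ..(Real.pi/2), ((Real.sin β)⁻¹ - β⁻¹))
        + ((∫ β in δ..(Real.pi/2), ((Real.sin β)⁻¹ - β⁻¹)) - (Real.log 4 - Real.log Real.pi))
        + (((∫ β in (0:ℝ)..δ, (Real.sqrt (β ^ 2 + c^2))⁻¹)
              + ∫ β in δ..(Real.pi/2), (Real.sqrt (β ^ 2 + c^2))⁻¹)
            - (Real.log Real.pi - Real.log c)) := by
    rw [hK, splitA, hlogc]
    ring
  rw [hsum]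
  have habs := abs_add_le
    (((∫ β in (0:ℝ)..δ, (Real.sqrt (Real.sin β ^ 2 + c^2 * Real.cos β ^ 2))⁻¹)
          - ∫ β in (0:ℝ)..δ, (Real.sqrt (β ^ 2 + c^2))⁻¹)
        + ((∫ β in δ..(Real.pi/2), (Real.sqrt (Real.sin β ^ 2 + c^2 * Real.cos β ^ 2))⁻¹)
            - (∫ β in δ..(Real.pi/2), (Real.sqrt (β ^ 2 + c^2))⁻¹)
            - ∫ β in δ..(Real.pi/2), ((Real.sin β)⁻¹ - β⁻¹))
        + ((∫ β in δ..(Real.pi/2), ((Real.sin β)⁻¹ - β⁻¹)) - (Real.log 4 - Real.log Real.pi)))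
    (((∫ β in (0:ℝ)..δ, (Real.sqrt (β ^ 2 + c^2))⁻¹)
              + ∫ β in δ..(Real.pi/2), (Real.sqrt (β ^ 2 + c^2))⁻¹)
            - (Real.log Real.pi - Real.log c))
  have habs2 := abs_add_le
    (((∫ β in (0:ℝ)..δ, (Real.sqrt (Real.sin β ^ 2 + c^2 * Real.cos β ^ 2))⁻¹)
          - ∫ β in (0:ℝ)..δ, (Real.sqrt (β ^ 2 + c^2))⁻¹)
        + ((∫ β in δ..(Real.pi/2), (Real.sqrt (Real.sin β ^ 2 + c^2 * Real.cos β ^ 2))⁻¹)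
            - (∫ β in δ..(Real.pi/2), (Real.sqrt (β ^ 2 + c^2))⁻¹)
            - ∫ β in δ..(Real.pi/2), ((Real.sin β)⁻¹ - β⁻¹)))
    ((∫ β in δ..(Real.pi/2), ((Real.sin β)⁻¹ - β⁻¹)) - (Real.log 4 - Real.log Real.pi))
  have habs3 := abs_add_le
    ((∫ β in (0:ℝ)..δ, (Real.sqrt (Real.sin β ^ 2 + c^2 * Real.cos β ^ 2))⁻¹)
          - ∫ β in (0:ℝ)..δ, (Real.sqrt (β ^ 2 + c^2))⁻¹)
    ((∫ β in δ..(Real.pi/2), (Real.sqrt (Real.sin β ^ 2 + c^2 * Real.cos β ^ 2))⁻¹)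
            - (∫ β in δ..(Real.pi/2), (Real.sqrt (β ^ 2 + c^2))⁻¹)
            - ∫ β in δ..(Real.pi/2), ((Real.sin β)⁻¹ - β⁻¹))
  -- convert exponentials
  have hc2 : c^2 ≤ Real.exp (-2*τ) := by
    rw [hcdef, pow_two, ← Real.exp_add]
    exact Real.exp_le_exp.2 (by linarith)
  have hq2 : c/δ^2 = Real.exp (-2*τ) := hcδ2
  linarith [hT1, hT2, hT3, hT4, habs, habs2, habs3, hδsq.le, hδsq.ge, hq2.le, hq2.ge]

section Main

noncomputable def Ef (τ : ℝ) : ℝ := ellipticE (kappa τ)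
noncomputable def Kf (τ : ℝ) : ℝ := ellipticK (kappa τ)
noncomputable def Pf (τ : ℝ) : ℝ :=
  2 * Ef τ * Kf τ - Ef τ ^ 2 - Real.exp (-8*τ) * Kf τ ^ 2
noncomputable def Qf (τ : ℝ) : ℝ :=
  Ef τ ^ 2 - 2 * Real.exp (-8*τ) * Ef τ * Kf τ + Real.exp (-8*τ) * Kf τ ^ 2
noncomputable def Df (τ : ℝ) : ℝ := 8 * τ + Real.log 16 - 1

lemma texp (k : ℝ) (hk : 0 < k) : Tendsto (fun τ : ℝ => Real.exp (-k*τ)) atTop (𝓝 0) := by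
  apply Real.tendsto_exp_atBot.comp
  exact Tendsto.const_mul_atTop_of_neg (by linarith) tendsto_id

lemma hE1 : Tendsto Ef atTop (𝓝 1) := by
  have hup : Tendsto (fun τ : ℝ => 1 + Real.exp (-4*τ)) atTop (𝓝 1) := by
    simpa using (tendsto_const_nhds (x := (1:ℝ))).add (texp 4 (by norm_num))
  apply tendsto_of_tendsto_of_tendsto_of_le_of_le' (tendsto_const_nhds (x := (1:ℝ))) hup
  · filter_upwards [eventually_ge_atTop (0:ℝ)] with τ hτ
    exact (Ebound hτ).1
  · filter_upwards [eventually_ge_atTop (0:ℝ)] with τ hτ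
    exact (Ebound hτ).2

lemma hKd : Tendsto (fun τ => Kf τ - (4*τ + Real.log 4)) atTop (𝓝 0) := by
  apply squeeze_zero_norm' (a := fun τ => 10 * Real.exp (-2*τ)) ?_ ?_
  · filter_upwards [eventually_ge_atTop (0:ℝ)] with τ hτ
    exact Kest hτ
  · simpa using (texp 2 (by norm_num)).const_mul 10

lemma hcK : Tendsto (fun τ => Real.exp (-4*τ) * Kf τ) atTop (𝓝 0) := by
  have h1 : Tendsto (fun τ : ℝ => Real.exp (-4*τ) * (Kf τ - (4*τ + Real.log 4))) atTop (𝓝 0) := by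
    simpa using (texp 4 (by norm_num)).mul hKd
  have h2 : Tendsto (fun τ : ℝ => (4*τ) * Real.exp (-(4*τ))) atTop (𝓝 0) := by
    have := (tendsto_pow_mul_exp_neg_atTop_nhds_zero 1).comp
      (Tendsto.const_mul_atTop (by norm_num : (0:ℝ) < 4) tendsto_id)
    simpa [Function.comp_def] using this
  have h3 : Tendsto (fun τ : ℝ => Real.log 4 * Real.exp (-4*τ)) atTop (𝓝 0) := by
    simpa using (texp 4 (by norm_num)).const_mul (Real.log 4)
  have hsum := (h1.add h2).add h3
  rw [add_zero, add_zero] at hsum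
  apply hsum.congr
  intro τ
  have : -(4*τ) = -4*τ := by ring
  rw [this]
  ring

lemma hcE : Tendsto (fun τ => Real.exp (-4*τ) * Ef τ) atTop (𝓝 0) := by
  simpa using (texp 4 (by norm_num)).mul hE1

lemma hQ1 : Tendsto Qf atTop (𝓝 1) := by
  have h := ((hE1.mul hE1).sub ((hcE.mul hcK).const_mul 2)).add (hcK.mul hcK)
  norm_num at h
  apply h.congr
  intro τ
  have h8 := exp8 τ
  unfold Qf
  simp only [neg_mul] at h8 ⊢
  linear_combination (Kf τ ^ 2 - 2 * Ef τ * Kf τ) * h8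

lemma hPD : Tendsto (fun τ => Pf τ - Df τ) atTop (𝓝 0) := by
  have hlog16 : Real.log 16 = 2 * Real.log 4 := by
    rw [show (16:ℝ) = 4^2 by norm_num, Real.log_pow]
    push_cast; ring
  have hEK : Tendsto (fun τ => (Ef τ - 1) * Kf τ) atTop (𝓝 0) := by
    apply squeeze_zero_norm' (a := fun τ => |Real.exp (-4*τ) * Kf τ|) ?_ ?_
    · filter_upwards [eventually_ge_atTop (0:ℝ)] with τ hτ
      have hEl : 1 ≤ Ef τ := (Ebound hτ).1
      have hEu : Ef τ ≤ 1 + Real.exp (-4*τ) := (Ebound hτ).2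
      rw [norm_mul, Real.norm_eq_abs, Real.norm_eq_abs, abs_mul]
      apply mul_le_mul_of_nonneg_right _ (abs_nonneg _)
      rw [abs_of_nonneg (by linarith), abs_of_pos (Real.exp_pos _)]
      linarith
    · simpa using hcK.abs
  have hE2 : Tendsto (fun τ => 1 - Ef τ ^ 2) atTop (𝓝 0) := by
    have := (tendsto_const_nhds (x := (1:ℝ))).sub (hE1.mul hE1)
    norm_num at this
    apply this.congr
    intro τ; ring
  have hcK2 : Tendsto (fun τ => (Real.exp (-4*τ) * Kf τ)^2) atTop (𝓝 0) := by
    have h := hcK.mul hcK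
    norm_num at h
    apply h.congr
    intro τ
    simp only [neg_mul]
    ring
  have hsum := ((hEK.const_mul 2).add (hKd.const_mul 2)).add (hE2.sub hcK2)
  norm_num at hsum
  apply hsum.congr
  intro τ
  have h8 := exp8 τ
  unfold Pf Df
  rw [hlog16]
  simp only [neg_mul] at h8 ⊢
  linear_combination (-(Kf τ ^ 2)) * h8

lemma hDtop : Tendsto Df atTop atTop := by
  have h8 : Tendsto (fun x : ℝ => 8*x) atTop atTop :=
    Tendsto.const_mul_atTop (show (0:ℝ) < 8 by norm_num) tendsto_id
  have h8' := tendsto_atTop_add_const_right atTop (Real.log 16 - 1) h8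
  apply h8'.congr
  intro τ
  unfold Df
  ring

lemma hratio : Tendsto (fun τ => Pf τ * Qf τ / ((1 - Real.exp (-8*τ))^2 * Df τ)) atTop (𝓝 1) := by
  have hDinv : Tendsto (fun τ => (Df τ)⁻¹) atTop (𝓝 0) := hDtop.inv_tendsto_atTop
  have hw : Tendsto (fun τ : ℝ => Real.exp (-8*τ)) atTop (𝓝 0) := texp 8 (by norm_num)
  have h1w : Tendsto (fun τ : ℝ => (((1:ℝ) - Real.exp (-8*τ))^2)⁻¹) atTop (𝓝 1) := by
    have h := ((tendsto_const_nhds (x := (1:ℝ))).sub hw)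
    norm_num at h
    have h2 := (h.mul h).inv₀ (by norm_num)
    norm_num at h2
    apply h2.congr
    intro τ
    simp only [neg_mul]
    rw [pow_two, mul_inv]
  have hPdivD : Tendsto (fun τ => Pf τ / Df τ) atTop (𝓝 1) := by
    have h := (hPD.mul hDinv)
    norm_num at h
    have h2 := h.add (tendsto_const_nhds (x := (1:ℝ)))
    norm_num at h2
    apply Tendsto.congr' _ h2
    filter_upwards [hDtop.eventually_gt_atTop 0] with τ hD0
    field_simp
    ring
  have hmain := (hPdivD.mul hQ1).mul h1w
  norm_num at hmain
  apply Tendsto.congr' _ hmain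
  filter_upwards [hDtop.eventually_gt_atTop 0, eventually_gt_atTop (0:ℝ)] with τ hD0 hτ0
  have h1 : ((1:ℝ) - Real.exp (-8*τ)) ≠ 0 := by
    have : Real.exp (-8*τ) < 1 := Real.exp_lt_one_iff.2 (by linarith)
    linarith
  field_simp

end Main

lemma alg_abst (E K w p : ℝ) (hp : p ≠ 0) (hw : (1:ℝ) - w ≠ 0) :
    ((4/p^2*(E*K))^2 - (-(4/(p^2*(1-w))) * ((E - w*K)*(K-E)))^2) * (p^4*(1-w)^2)
      = 16*(2*E*K - E^2 - w*K^2)*(E^2 - 2*w*E*K + w*K^2) := by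
  field_simp
  ring

lemma Galg {τ : ℝ} (hτ : 0 < τ) :
    (G₁₂ τ ^ 2 - G₁₁ τ ^ 2) * (Real.pi ^ 4 * (1 - Real.exp (-8*τ))^2)
      = 16 * Pf τ * Qf τ := by
  have hk2 : kappa τ ^ 2 = 1 - Real.exp (-8*τ) := by
    rw [kappa_sq hτ.le, exp8]
  have hkT : kappaT τ ^ 2 = Real.exp (-8*τ) := by
    unfold kappaT; exact exp8 τ
  have hw1 : Real.exp (-8*τ) < 1 := Real.exp_lt_one_iff.2 (by linarith)
  have h1w : (1:ℝ) - Real.exp (-8*τ) ≠ 0 := by linarith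
  have hπ : Real.pi ≠ 0 := Real.pi_ne_zero
  unfold G₁₁ G₁₂ Pf Qf Ef Kf
  rw [hk2, hkT]
  exact alg_abst _ _ _ _ hπ h1w


/-- Asymptotics of the Rényi entropy R(τ) = (1/2)·log(G₁₂² − G₁₁²). -/
theorem stmt_7 :
    Tendsto (fun τ => (1 / 2) * Real.log (G₁₂ τ ^ 2 - G₁₁ τ ^ 2) -
      (1 / 2) * Real.log (16 * (8 * τ + Real.log 16 - 1) / Real.pi ^ 4)) atTop (𝓝 0) := by
  have hπ4 : (0:ℝ) < Real.pi ^ 4 := by positivity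
  have hreq : ∀ᶠ τ : ℝ in atTop,
      Pf τ * Qf τ / ((1 - Real.exp (-8*τ))^2 * Df τ)
        = (G₁₂ τ ^ 2 - G₁₁ τ ^ 2) / (16 * Df τ / Real.pi ^ 4) := by
    filter_upwards [eventually_gt_atTop (0:ℝ), hDtop.eventually_gt_atTop 0] with τ hτ0 hD0
    have hw1 : Real.exp (-8*τ) < 1 := Real.exp_lt_one_iff.2 (by linarith)
    have h1w : (0:ℝ) < 1 - Real.exp (-8*τ) := by linarith
    have hX : G₁₂ τ ^ 2 - G₁₁ τ ^ 2
        = 16 * Pf τ * Qf τ / (Real.pi ^ 4 * (1 - Real.exp (-8*τ))^2) := by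
      rw [eq_div_iff (by positivity)]
      exact Galg hτ0
    have hπ : Real.pi ≠ 0 := Real.pi_ne_zero
    have hd1 : (0:ℝ) < (1 - Real.exp (-8*τ))^2 * Df τ := mul_pos (pow_pos h1w 2) hD0
    have hd2 : (0:ℝ) < 16 * Df τ / Real.pi ^ 4 := by
      apply div_pos (by linarith) (by positivity)
    rw [hX, div_div, div_eq_div_iff hd1.ne' (by positivity : (0:ℝ) < Real.pi ^ 4 * (1 - Real.exp (-8*τ)) ^ 2 * (16 * Df τ / Real.pi ^ 4)).ne']
    field_simp
  have hr : Tendsto (fun τ => (G₁₂ τ ^ 2 - G₁₁ τ ^ 2) / (16 * Df τ / Real.pi ^ 4))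
      atTop (𝓝 1) := Tendsto.congr' hreq hratio
  have hhalf : ∀ᶠ τ : ℝ in atTop,
      1/2 < (G₁₂ τ ^ 2 - G₁₁ τ ^ 2) / (16 * Df τ / Real.pi ^ 4) :=
    hr.eventually (lt_mem_nhds (by norm_num : (1:ℝ)/2 < 1))
  have heq : ∀ᶠ τ : ℝ in atTop,
      (1 / 2) * Real.log ((G₁₂ τ ^ 2 - G₁₁ τ ^ 2) / (16 * Df τ / Real.pi ^ 4))
        = (1 / 2) * Real.log (G₁₂ τ ^ 2 - G₁₁ τ ^ 2) -
            (1 / 2) * Real.log (16 * (8 * τ + Real.log 16 - 1) / Real.pi ^ 4) := by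
    filter_upwards [hhalf, hDtop.eventually_gt_atTop 0] with τ h2 hD0
    have hY : 0 < 16 * Df τ / Real.pi ^ 4 := by positivity
    have hX : 0 < G₁₂ τ ^ 2 - G₁₁ τ ^ 2 := by
      have hXY : G₁₂ τ ^ 2 - G₁₁ τ ^ 2
          = ((G₁₂ τ ^ 2 - G₁₁ τ ^ 2) / (16 * Df τ / Real.pi ^ 4)) * (16 * Df τ / Real.pi ^ 4) := by
        field_simp
      rw [hXY]
      positivity
    rw [Real.log_div hX.ne' hY.ne']
    have hDf : Df τ = 8 * τ + Real.log 16 - 1 := rfl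
    rw [hDf]
    ring
  have hfin : Tendsto (fun τ => (1 / 2) *
      Real.log ((G₁₂ τ ^ 2 - G₁₁ τ ^ 2) / (16 * Df τ / Real.pi ^ 4))) atTop (𝓝 0) := by
    have hlog : Tendsto (fun τ => Real.log ((G₁₂ τ ^ 2 - G₁₁ τ ^ 2) / (16 * Df τ / Real.pi ^ 4)))
        atTop (𝓝 0) := by
      have := (Real.continuousAt_log (by norm_num : (1:ℝ) ≠ 0)).tendsto.comp hr
      simpa [Function.comp_def] using this
    simpa using hlog.const_mul (1/2 : ℝ)
  exact Tendsto.congr' heq hfin
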